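/- For α, β ≥ 0 with α² + β² = 1, the quantity τ = [a + b + 4]/(8 - 3 log₂ 3) - (-2α² log₂ α² - 2β² log₂ β²)/(8 - 3 log₂ 3) - 2/(8 - 3 log₂ 3), where a = -α² log₂ α² - (2-α²) log₂(2-α²) and b = -β² log₂ β² - (2-β²) log₂(2-β²), satisfies τ ≤ 0, with equality if and only if α β = 0. -/
import Mathlib


open Real

noncomputable def tauEt (α β : ℝ) : ℝ :=
  ((-α ^ 2 * logb 2 (α ^ 2) - (2 - α ^ 2) * logb 2 (2 - α ^ 2)) +
      (-β ^ 2 * logb 2 (β ^ 2) - (2 - β ^ 2) * logb 2 (2 - β ^ 2)) + 4) /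
      (8 - 3 * logb 2 3)
    - (-2 * α ^ 2 * logb 2 (α ^ 2) - 2 * β ^ 2 * logb 2 (β ^ 2)) /
      (8 - 3 * logb 2 3)
    - 2 / (8 - 3 * logb 2 3)

lemma keyF (x : ℝ) (hx0 : 0 < x) (hx1 : x < 1) :
    x * log x + (1 - x) * log (1 - x) - (2 - x) * log (2 - x)
      - (1 + x) * log (1 + x) + 2 * log 2 < 0 := by
  have h1x : (0:ℝ) < 1 - x := by linarith
  have h2x : (0:ℝ) < 2 - x := by linarith
  have h1px : (0:ℝ) < 1 + x := by linarith
  have e1 : log (2 * x / (1 + x)) ≤ 2 * x / (1 + x) - 1 :=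
    Real.log_le_sub_one_of_pos (by positivity)
  have e2 : log (2 * (1 - x) / (2 - x)) ≤ 2 * (1 - x) / (2 - x) - 1 :=
    Real.log_le_sub_one_of_pos (by positivity)
  have e3 : log 2 < log ((2 - x) * (1 + x)) :=
    Real.log_lt_log (by norm_num) (by nlinarith)
  have l1 : log (2 * x / (1 + x)) = log 2 + log x - log (1 + x) := by
    rw [Real.log_div (by positivity) h1px.ne', Real.log_mul (by norm_num) hx0.ne']
  have l2 : log (2 * (1 - x) / (2 - x)) = log 2 + log (1 - x) - log (2 - x) := by
    rw [Real.log_div (by positivity) h2x.ne', Real.log_mul (by norm_num) h1x.ne']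
  have l3 : log ((2 - x) * (1 + x)) = log (2 - x) + log (1 + x) :=
    Real.log_mul h2x.ne' h1px.ne'
  have b1 : x * (log 2 + log x - log (1 + x)) ≤ x * (2 * x / (1 + x) - 1) := by
    rw [← l1]; exact mul_le_mul_of_nonneg_left e1 hx0.le
  have b2 : (1 - x) * (log 2 + log (1 - x) - log (2 - x))
      ≤ (1 - x) * (2 * (1 - x) / (2 - x) - 1) := by
    rw [← l2]; exact mul_le_mul_of_nonneg_left e2 h1x.le
  have q1 : x * (2 * x / (1 + x) - 1) ≤ 0 := by
    have hd : 2 * x / (1 + x) - 1 = (x - 1) / (1 + x) := by field_simp; ring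
    rw [hd]
    exact mul_nonpos_of_nonneg_of_nonpos hx0.le
      (div_nonpos_iff.mpr (Or.inr ⟨by linarith, h1px.le⟩))
  have q2 : (1 - x) * (2 * (1 - x) / (2 - x) - 1) ≤ 0 := by
    have hd : 2 * (1 - x) / (2 - x) - 1 = (-x) / (2 - x) := by field_simp; ring
    rw [hd]
    exact mul_nonpos_of_nonneg_of_nonpos h1x.le
      (div_nonpos_iff.mpr (Or.inr ⟨by linarith, h2x.le⟩))
  have expand : x * log x + (1 - x) * log (1 - x) - (2 - x) * log (2 - x)
      - (1 + x) * log (1 + x) + 2 * log 2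
      = x * (log 2 + log x - log (1 + x))
        + (1 - x) * (log 2 + log (1 - x) - log (2 - x))
        + (log 2 - (log (2 - x) + log (1 + x))) := by ring
  rw [expand]
  rw [l3] at e3
  linarith

theorem tauEt_nonpos (α β : ℝ) (hα : 0 ≤ α) (hβ : 0 ≤ β)
    (h : α ^ 2 + β ^ 2 = 1) :
    tauEt α β ≤ 0 ∧ (tauEt α β = 0 ↔ α * β = 0) := by
  rcases eq_or_lt_of_le hα with hα0 | hα0
  · -- α = 0, β = 1
    have hβ1 : β = 1 := by nlinarith
    have hz : tauEt α β = 0 := by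
      rw [← hα0, hβ1]
      unfold tauEt
      norm_num
    rw [hz, ← hα0]
    norm_num
  rcases eq_or_lt_of_le hβ with hβ0 | hβ0
  · -- β = 0, α = 1
    have hα1 : α = 1 := by nlinarith
    have hz : tauEt α β = 0 := by
      rw [← hβ0, hα1]
      unfold tauEt
      norm_num
    rw [hz, ← hβ0]
    norm_num
  · -- main case: 0 < α, 0 < β
    set x := α ^ 2 with hxdef
    have hx0 : 0 < x := by positivity
    have hx1 : x < 1 := by nlinarith
    have hb2 : β ^ 2 = 1 - x := by linarith
    have hlog2 : (0:ℝ) < log 2 := Real.log_pos (by norm_num)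
    have hd : (0:ℝ) < 8 - 3 * logb 2 3 := by
      have h4 : Real.logb 2 4 = 2 := by
        rw [show (4:ℝ) = 2 ^ (2:ℕ) by norm_num, Real.logb_pow,
          Real.logb_self_eq_one (by norm_num)]
        norm_num
      have h34 : Real.logb 2 3 < Real.logb 2 4 :=
        Real.logb_lt_logb (by norm_num) (by norm_num) (by norm_num)
      linarith
    have tau_eq : tauEt α β
        = (x * logb 2 x + (1 - x) * logb 2 (1 - x) - (2 - x) * logb 2 (2 - x)
            - (1 + x) * logb 2 (1 + x) + 2) / (8 - 3 * logb 2 3) := by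
      unfold tauEt
      rw [hb2, show (2 - (1 - x) : ℝ) = 1 + x by ring]
      ring
    have hN : x * logb 2 x + (1 - x) * logb 2 (1 - x) - (2 - x) * logb 2 (2 - x)
        - (1 + x) * logb 2 (1 + x) + 2 < 0 := by
      have hF := keyF x hx0 hx1
      have hmul : (x * logb 2 x + (1 - x) * logb 2 (1 - x) - (2 - x) * logb 2 (2 - x)
          - (1 + x) * logb 2 (1 + x) + 2) * log 2
          = x * log x + (1 - x) * log (1 - x) - (2 - x) * log (2 - x)
            - (1 + x) * log (1 + x) + 2 * log 2 := by
        simp only [Real.logb]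
        field_simp
      nlinarith [hmul, hF, hlog2]
    have htau : tauEt α β < 0 := by
      rw [tau_eq]
      exact div_neg_of_neg_of_pos hN hd
    refine ⟨htau.le, ?_, ?_⟩
    · intro hc; exact absurd hc htau.ne
    · intro hc; exact absurd hc (mul_pos hα0 hβ0).ne'
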